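/- In a quasitriangular Hopf algebra (H, R), the Drinfeld element u = Σ_k S(t_k) s_k (where R = Σ_k s_k ⊗ t_k) satisfies S²(x) = u x u⁻¹ for all x ∈ H. -/

import Mathlib

open TensorProduct

noncomputable section

variable {H : Type*} [Ring H] [HopfAlgebra ℂ H]

/-- `a ⊗ b ↦ a ⊗ b ⊗ 1` in `H ⊗ (H ⊗ H)`. -/
def R12 (R : H ⊗[ℂ] H) : H ⊗[ℂ] (H ⊗[ℂ] H) :=
  (Algebra.TensorProduct.map (AlgHom.id ℂ H) Algebra.TensorProduct.includeLeft) R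

/-- `a ⊗ b ↦ a ⊗ 1 ⊗ b` in `H ⊗ (H ⊗ H)`. -/
def R13 (R : H ⊗[ℂ] H) : H ⊗[ℂ] (H ⊗[ℂ] H) :=
  (Algebra.TensorProduct.map (AlgHom.id ℂ H) Algebra.TensorProduct.includeRight) R

/-- `a ⊗ b ↦ 1 ⊗ a ⊗ b` in `H ⊗ (H ⊗ H)`. -/
def R23 (R : H ⊗[ℂ] H) : H ⊗[ℂ] (H ⊗[ℂ] H) :=
  (Algebra.TensorProduct.includeRight : (H ⊗[ℂ] H) →ₐ[ℂ] H ⊗[ℂ] (H ⊗[ℂ] H)) R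

/-- `R` is an `R`-matrix making `H` quasitriangular: `R` is invertible,
`R Δ(x) R⁻¹ = Δᵒᵖ(x)`, `(id ⊗ Δ)R = R₁₃R₁₂` and `(Δ ⊗ id)R = R₁₃R₂₃`. -/
def IsRMatrix (R : H ⊗[ℂ] H) : Prop :=
  IsUnit R ∧
  (∀ x : H, R * Coalgebra.comul x
      = (TensorProduct.comm ℂ H H) (Coalgebra.comul (R := ℂ) x) * R) ∧
  (TensorProduct.map LinearMap.id (Bialgebra.comulAlgHom ℂ H).toLinearMap) R
      = R13 R * R12 R ∧
  (TensorProduct.assoc ℂ H H H)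
      ((TensorProduct.map (Bialgebra.comulAlgHom ℂ H).toLinearMap LinearMap.id) R)
      = R13 R * R23 R

/-- The Drinfeld element `u = Σ S(t_k) s_k` of a quasitriangular Hopf algebra,
where `R = Σ s_k ⊗ t_k`. -/
def drinfeldElement (R : H ⊗[ℂ] H) : H :=
  (LinearMap.mul' ℂ H)
    ((TensorProduct.map (HopfAlgebra.antipode (R := ℂ)) LinearMap.id)
      ((TensorProduct.comm ℂ H H) R))

open Coalgebra


local notation "S" => HopfAlgebra.antipode (R := ℂ)
local notation "ε" => Coalgebra.counit (R := ℂ)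

lemma antipode_one' : S (1 : H) = 1 := by
  have := HopfAlgebra.mul_antipode_rTensor_comul_apply (R := ℂ) (a := (1 : H))
  simpa [Bialgebra.comul_one, Algebra.TensorProduct.one_def] using this

def reprMul {ι κ : Type*} {a b : H} (ra : Repr ℂ a ι) (rb : Repr ℂ b κ) : Repr ℂ (a * b) (ι × κ) where
  index := ra.index ×ˢ rb.index
  left p := ra.left p.1 * rb.left p.2
  right p := ra.right p.1 * rb.right p.2
  eq := by
    rw [Finset.sum_product, Bialgebra.comul_mul, ← ra.eq, ← rb.eq, Finset.sum_mul_sum]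
    simp [Algebra.TensorProduct.tmul_mul_tmul]

lemma sum_counit_smul_right {ι : Type*} {a : H} (r : Repr ℂ a ι) :
    ∑ i ∈ r.index, ε (r.left i) • r.right i = a := by
  have := congrArg (TensorProduct.lid ℂ H) (Coalgebra.sum_counit_tmul_eq r)
  simp only [map_sum, lid_tmul] at this
  simpa using this

lemma sum_counit_smul_left {ι : Type*} {a : H} (r : Repr ℂ a ι) :
    ∑ i ∈ r.index, ε (r.right i) • r.left i = a := by
  have := congrArg (TensorProduct.rid ℂ H) (Coalgebra.sum_tmul_counit_eq r)
  simp only [map_sum, rid_tmul] at this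
  simpa using this

def ψaux (y₁ y₂ y₃ : H) : H ⊗[ℂ] (H ⊗[ℂ] H) →ₗ[ℂ] H :=
  LinearMap.mul' ℂ H ∘ₗ
    TensorProduct.map (LinearMap.mulLeft ℂ (S y₁) ∘ₗ S)
      (LinearMap.mul' ℂ H ∘ₗ
        TensorProduct.map (LinearMap.mulRight ℂ y₂) (S ∘ₗ LinearMap.mulRight ℂ y₃))

def φaux (x₁ x₂ x₃ : H) : H ⊗[ℂ] (H ⊗[ℂ] H) →ₗ[ℂ] H :=
  LinearMap.mul' ℂ H ∘ₗ
    TensorProduct.map (LinearMap.mulRight ℂ (S x₁) ∘ₗ S)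
      (LinearMap.mul' ℂ H ∘ₗ
        TensorProduct.map (LinearMap.mulLeft ℂ x₂) (S ∘ₗ LinearMap.mulLeft ℂ x₃))

@[simp] lemma ψaux_tmul (y₁ y₂ y₃ x₁ x₂ x₃ : H) :
    ψaux y₁ y₂ y₃ (x₁ ⊗ₜ[ℂ] (x₂ ⊗ₜ[ℂ] x₃))
      = (S y₁ * S x₁) * ((x₂ * y₂) * S (x₃ * y₃)) := by simp [ψaux]

@[simp] lemma φaux_tmul (x₁ x₂ x₃ y₁ y₂ y₃ : H) :
    φaux x₁ x₂ x₃ (y₁ ⊗ₜ[ℂ] (y₂ ⊗ₜ[ℂ] y₃))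
      = (S y₁ * S x₁) * ((x₂ * y₂) * S (x₃ * y₃)) := by simp [φaux]

lemma sum4_swap {ι₁ ι₂ ι₃ ι₄ M : Type*} [AddCommMonoid M]
    (s : Finset ι₁) (t : ι₁ → Finset ι₂) (u : Finset ι₃) (v : ι₃ → Finset ι₄)
    (f : ι₁ → ι₂ → ι₃ → ι₄ → M) :
    ∑ i ∈ s, ∑ k ∈ t i, ∑ j ∈ u, ∑ l ∈ v j, f i k j l
      = ∑ j ∈ u, ∑ l ∈ v j, ∑ i ∈ s, ∑ k ∈ t i, f i k j l := by
  calc ∑ i ∈ s, ∑ k ∈ t i, ∑ j ∈ u, ∑ l ∈ v j, f i k j l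
      = ∑ i ∈ s, ∑ j ∈ u, ∑ k ∈ t i, ∑ l ∈ v j, f i k j l :=
        Finset.sum_congr rfl fun i _ => Finset.sum_comm
    _ = ∑ j ∈ u, ∑ i ∈ s, ∑ k ∈ t i, ∑ l ∈ v j, f i k j l := Finset.sum_comm
    _ = ∑ j ∈ u, ∑ i ∈ s, ∑ l ∈ v j, ∑ k ∈ t i, f i k j l :=
        Finset.sum_congr rfl fun j _ => Finset.sum_congr rfl fun i _ => Finset.sum_comm
    _ = ∑ j ∈ u, ∑ l ∈ v j, ∑ i ∈ s, ∑ k ∈ t i, f i k j l :=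
        Finset.sum_congr rfl fun j _ => Finset.sum_comm

theorem antipode_mul' (a b : H) : S (a * b) = S b * S a := by
  classical
  let ra := Repr.arbitrary ℂ a
  let rb := Repr.arbitrary ℂ b
  let ra₁ : ∀ i : H × H, Repr ℂ (ra.left i) (H × H) := fun i => Repr.arbitrary ℂ _
  let ra₂ : ∀ i : H × H, Repr ℂ (ra.right i) (H × H) := fun i => Repr.arbitrary ℂ _
  let rb₁ : ∀ j : H × H, Repr ℂ (rb.left j) (H × H) := fun j => Repr.arbitrary ℂ _
  let rb₂ : ∀ j : H × H, Repr ℂ (rb.right j) (H × H) := fun j => Repr.arbitrary ℂ _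
  have key : ∀ y₁ y₂ y₃ : H,
      (∑ i ∈ ra.index, ∑ k ∈ (ra₁ i).index,
        (S y₁ * S ((ra₁ i).left k)) * ((((ra₁ i).right k) * y₂) * S (ra.right i * y₃)))
    = ∑ i ∈ ra.index, ∑ k ∈ (ra₂ i).index,
        (S y₁ * S (ra.left i)) * ((((ra₂ i).left k) * y₂) * S ((ra₂ i).right k * y₃)) := by
    intro y₁ y₂ y₃
    have h := congrArg (ψaux y₁ y₂ y₃) (Coalgebra.sum_tmul_tmul_eq ra ra₁ ra₂)
    simpa only [map_sum, ψaux_tmul] using h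
  have key' : ∀ x₁ x₂ x₃ : H,
      (∑ j ∈ rb.index, ∑ l ∈ (rb₁ j).index,
        (S ((rb₁ j).left l) * S x₁) * ((x₂ * ((rb₁ j).right l)) * S (x₃ * rb.right j)))
    = ∑ j ∈ rb.index, ∑ l ∈ (rb₂ j).index,
        (S (rb.left j) * S x₁) * ((x₂ * ((rb₂ j).left l)) * S (x₃ * (rb₂ j).right l)) := by
    intro x₁ x₂ x₃
    have h := congrArg (φaux x₁ x₂ x₃) (Coalgebra.sum_tmul_tmul_eq rb rb₁ rb₂)
    simpa only [map_sum, φaux_tmul] using h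
  have hTT :
      (∑ j ∈ rb.index, ∑ l ∈ (rb₁ j).index, ∑ i ∈ ra.index, ∑ k ∈ (ra₁ i).index,
        (S ((rb₁ j).left l) * S ((ra₁ i).left k)) *
          ((((ra₁ i).right k) * ((rb₁ j).right l)) * S (ra.right i * rb.right j)))
    = ∑ i ∈ ra.index, ∑ k ∈ (ra₂ i).index, ∑ j ∈ rb.index, ∑ l ∈ (rb₂ j).index,
        (S (rb.left j) * S (ra.left i)) *
          ((((ra₂ i).left k) * ((rb₂ j).left l)) * S ((ra₂ i).right k * (rb₂ j).right l)) := by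
    calc (∑ j ∈ rb.index, ∑ l ∈ (rb₁ j).index, ∑ i ∈ ra.index, ∑ k ∈ (ra₁ i).index,
        (S ((rb₁ j).left l) * S ((ra₁ i).left k)) *
          ((((ra₁ i).right k) * ((rb₁ j).right l)) * S (ra.right i * rb.right j)))
        = ∑ j ∈ rb.index, ∑ l ∈ (rb₁ j).index, ∑ i ∈ ra.index, ∑ k ∈ (ra₂ i).index,
            (S ((rb₁ j).left l) * S (ra.left i)) *
              ((((ra₂ i).left k) * ((rb₁ j).right l)) * S ((ra₂ i).right k * rb.right j)) :=
          Finset.sum_congr rfl fun j _ => Finset.sum_congr rfl fun l _ => key _ _ _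
      _ = ∑ i ∈ ra.index, ∑ k ∈ (ra₂ i).index, ∑ j ∈ rb.index, ∑ l ∈ (rb₁ j).index,
            (S ((rb₁ j).left l) * S (ra.left i)) *
              ((((ra₂ i).left k) * ((rb₁ j).right l)) * S ((ra₂ i).right k * rb.right j)) :=
          (sum4_swap _ _ _ _ _).symm
      _ = ∑ i ∈ ra.index, ∑ k ∈ (ra₂ i).index, ∑ j ∈ rb.index, ∑ l ∈ (rb₂ j).index,
            (S (rb.left j) * S (ra.left i)) *
              ((((ra₂ i).left k) * ((rb₂ j).left l)) * S ((ra₂ i).right k * (rb₂ j).right l)) :=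
          Finset.sum_congr rfl fun i _ => Finset.sum_congr rfl fun k _ => key' _ _ _
  -- collapse the left-hand side to S (a * b)
  have collapseA : ∀ (i : H × H) (p q c : H),
      ∑ k ∈ (ra₁ i).index,
          (p * S ((ra₁ i).left k)) * ((((ra₁ i).right k) * q) * c)
        = ε (ra.left i) • (p * (q * c)) := by
    intro i p q c
    have h1 : ∀ k, (p * S ((ra₁ i).left k)) * ((((ra₁ i).right k) * q) * c)
        = p * ((S ((ra₁ i).left k) * ((ra₁ i).right k)) * (q * c)) := by
      intro k; simp [mul_assoc]
    rw [Finset.sum_congr rfl fun k _ => h1 k, ← Finset.mul_sum, ← Finset.sum_mul,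
      HopfAlgebra.sum_antipode_mul_eq_smul (ra₁ i)]
    simp [smul_mul_assoc, mul_smul_comm]
  have foldA : ∀ (P Q x : H),
      ∑ i ∈ ra.index, ε (ra.left i) • (P * (Q * S (ra.right i * x))) = P * (Q * S (a * x)) := by
    intro P Q x
    have h0 : ∑ i ∈ ra.index, ε (ra.left i) • (ra.right i * x) = a * x := by
      simp_rw [← smul_mul_assoc]
      rw [← Finset.sum_mul, sum_counit_smul_right]
    calc ∑ i ∈ ra.index, ε (ra.left i) • (P * (Q * S (ra.right i * x)))
        = ∑ i ∈ ra.index, P * (Q * S (ε (ra.left i) • (ra.right i * x))) := by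
          simp_rw [map_smul, mul_smul_comm]
      _ = P * (Q * S (∑ i ∈ ra.index, ε (ra.left i) • (ra.right i * x))) := by
          rw [← Finset.mul_sum]
          congr 1
          rw [← Finset.mul_sum]
          congr 1
          rw [map_sum]
      _ = P * (Q * S (a * x)) := by rw [h0]
  have collapseB : ∀ (j : H × H) (c : H),
      ∑ l ∈ (rb₁ j).index, S ((rb₁ j).left l) * (((rb₁ j).right l) * c)
        = ε (rb.left j) • c := by
    intro j c
    simp_rw [← mul_assoc]
    rw [← Finset.sum_mul, HopfAlgebra.sum_antipode_mul_eq_smul (rb₁ j), smul_mul_assoc, one_mul]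
  have hB :
      (∑ j ∈ rb.index, ∑ l ∈ (rb₁ j).index, ∑ i ∈ ra.index, ∑ k ∈ (ra₁ i).index,
        (S ((rb₁ j).left l) * S ((ra₁ i).left k)) *
          ((((ra₁ i).right k) * ((rb₁ j).right l)) * S (ra.right i * rb.right j)))
      = S (a * b) := by
    calc (∑ j ∈ rb.index, ∑ l ∈ (rb₁ j).index, ∑ i ∈ ra.index, ∑ k ∈ (ra₁ i).index,
        (S ((rb₁ j).left l) * S ((ra₁ i).left k)) *
          ((((ra₁ i).right k) * ((rb₁ j).right l)) * S (ra.right i * rb.right j)))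
        = ∑ j ∈ rb.index, ∑ l ∈ (rb₁ j).index, ∑ i ∈ ra.index,
            ε (ra.left i) • (S ((rb₁ j).left l) * (((rb₁ j).right l) * S (ra.right i * rb.right j))) :=
          Finset.sum_congr rfl fun j _ => Finset.sum_congr rfl fun l _ =>
            Finset.sum_congr rfl fun i _ => collapseA i _ _ _
      _ = ∑ j ∈ rb.index, ∑ l ∈ (rb₁ j).index,
            S ((rb₁ j).left l) * (((rb₁ j).right l) * S (a * rb.right j)) :=
          Finset.sum_congr rfl fun j _ => Finset.sum_congr rfl fun l _ => foldA _ _ _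
      _ = ∑ j ∈ rb.index, ε (rb.left j) • S (a * rb.right j) :=
          Finset.sum_congr rfl fun j _ => collapseB j _
      _ = S (a * b) := by
          have h0 : ∑ j ∈ rb.index, ε (rb.left j) • (a * rb.right j) = a * b := by
            simp_rw [← mul_smul_comm]
            rw [← Finset.mul_sum, sum_counit_smul_right]
          rw [← h0, map_sum]
          simp_rw [map_smul]
  -- collapse the right-hand side to S b * S a
  have collapseC : ∀ (i : H × H) (j : H × H) (C : H),
      ∑ k ∈ (ra₂ i).index, ∑ l ∈ (rb₂ j).index,
        C * ((((ra₂ i).left k) * ((rb₂ j).left l)) * S ((ra₂ i).right k * (rb₂ j).right l))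
      = (ε (ra.right i) * ε (rb.right j)) • C := by
    intro i j C
    simp_rw [← Finset.mul_sum]
    have hsum : ∑ k ∈ (ra₂ i).index, ∑ l ∈ (rb₂ j).index,
        (((ra₂ i).left k) * ((rb₂ j).left l)) * S ((ra₂ i).right k * (rb₂ j).right l)
        = ε (ra.right i * rb.right j) • (1 : H) := by
      rw [← Finset.sum_product']
      exact HopfAlgebra.sum_mul_antipode_eq_smul (reprMul (ra₂ i) (rb₂ j))
    rw [hsum]
    simp [Bialgebra.counit_mul, mul_smul_comm]
  have hA :
      (∑ i ∈ ra.index, ∑ k ∈ (ra₂ i).index, ∑ j ∈ rb.index, ∑ l ∈ (rb₂ j).index,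
        (S (rb.left j) * S (ra.left i)) *
          ((((ra₂ i).left k) * ((rb₂ j).left l)) * S ((ra₂ i).right k * (rb₂ j).right l)))
      = S b * S a := by
    calc (∑ i ∈ ra.index, ∑ k ∈ (ra₂ i).index, ∑ j ∈ rb.index, ∑ l ∈ (rb₂ j).index,
        (S (rb.left j) * S (ra.left i)) *
          ((((ra₂ i).left k) * ((rb₂ j).left l)) * S ((ra₂ i).right k * (rb₂ j).right l)))
        = ∑ i ∈ ra.index, ∑ j ∈ rb.index, ∑ k ∈ (ra₂ i).index, ∑ l ∈ (rb₂ j).index,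
            (S (rb.left j) * S (ra.left i)) *
              ((((ra₂ i).left k) * ((rb₂ j).left l)) * S ((ra₂ i).right k * (rb₂ j).right l)) :=
          Finset.sum_congr rfl fun i _ => Finset.sum_comm
      _ = ∑ i ∈ ra.index, ∑ j ∈ rb.index,
            (ε (ra.right i) * ε (rb.right j)) • (S (rb.left j) * S (ra.left i)) :=
          Finset.sum_congr rfl fun i _ => Finset.sum_congr rfl fun j _ => collapseC i j _
      _ = S b * S a := by
          have hb' : S b = ∑ j ∈ rb.index, ε (rb.right j) • S (rb.left j) := by
            conv_lhs => rw [← sum_counit_smul_left rb]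
            rw [map_sum]
            simp_rw [map_smul]
          have ha' : S a = ∑ i ∈ ra.index, ε (ra.right i) • S (ra.left i) := by
            conv_lhs => rw [← sum_counit_smul_left ra]
            rw [map_sum]
            simp_rw [map_smul]
          rw [hb', ha', Finset.sum_mul_sum, Finset.sum_comm]
          refine Finset.sum_congr rfl fun i _ => Finset.sum_congr rfl fun j _ => ?_
          simp only [smul_mul_assoc, mul_smul_comm, smul_smul]
  rw [← hB, hTT, hA]



/-- `a ⊗ b ↦ S b * a`, the map defining the Drinfeld element. -/
def drinMap : H ⊗[ℂ] H →ₗ[ℂ] H :=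
  LinearMap.mul' ℂ H ∘ₗ
    (TensorProduct.map S LinearMap.id) ∘ₗ (TensorProduct.comm ℂ H H).toLinearMap

@[simp] lemma drinMap_tmul (a b : H) : drinMap (a ⊗ₜ[ℂ] b) = S b * a := by
  simp [drinMap]

/-- `a ⊗ (b ⊗ c) ↦ (S (S c) * S b) * (u * a)`. -/
def psiM (u : H) : H ⊗[ℂ] (H ⊗[ℂ] H) →ₗ[ℂ] H :=
  LinearMap.mul' ℂ H ∘ₗ
    (TensorProduct.map
      (LinearMap.mul' ℂ H ∘ₗ TensorProduct.map (S ∘ₗ S) S ∘ₗ (TensorProduct.comm ℂ H H).toLinearMap)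
      (LinearMap.mulLeft ℂ u)) ∘ₗ (TensorProduct.comm ℂ H (H ⊗[ℂ] H)).toLinearMap

@[simp] lemma psiM_tmul (u a b c : H) :
    psiM u (a ⊗ₜ[ℂ] (b ⊗ₜ[ℂ] c)) = (S (S c) * S b) * (u * a) := by
  simp [psiM]

/-- `b ⊗ c ↦ ε c • b`. -/
def gcounit : H ⊗[ℂ] H →ₗ[ℂ] H :=
  (TensorProduct.rid ℂ H).toLinearMap ∘ₗ LinearMap.lTensor H ε

@[simp] lemma gcounit_tmul (b c : H) : gcounit (b ⊗ₜ[ℂ] c) = ε c • b := by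
  simp [gcounit]

lemma gcounit_comul (x : H) : gcounit (Coalgebra.comul (R := ℂ) x) = x := by
  rw [gcounit, LinearMap.comp_apply, Coalgebra.lTensor_counit_comul]
  simp

/-- `b ⊗ c ↦ b * S c`. -/
def hSmulS : H ⊗[ℂ] H →ₗ[ℂ] H :=
  LinearMap.mul' ℂ H ∘ₗ LinearMap.lTensor H S

@[simp] lemma hSmulS_tmul (b c : H) : hSmulS (b ⊗ₜ[ℂ] c) = b * S c := by
  simp [hSmulS]

lemma hSmulS_comul (x : H) :
    hSmulS (Coalgebra.comul (R := ℂ) x) = ε x • (1 : H) := by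
  rw [hSmulS, LinearMap.comp_apply]
  rw [show LinearMap.lTensor H S = (HopfAlgebra.antipode (R := ℂ)).lTensor H from rfl]
  rw [HopfAlgebra.mul_antipode_lTensor_comul_apply]
  rw [Algebra.algebraMap_eq_smul_one]


/-- In a quasitriangular Hopf algebra `(H, R)`, the Drinfeld element
`u = Σ S(t_k) s_k` is invertible and satisfies `S²(x) = u x u⁻¹` for all `x ∈ H`. -/
theorem drinfeld_element_conjugates_antipode_sq
    {H : Type*} [Ring H] [HopfAlgebra ℂ H] [FiniteDimensional ℂ H]
    (R : H ⊗[ℂ] H) (hR : IsRMatrix R) :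
    ∃ v : H, drinfeldElement R * v = 1 ∧ v * drinfeldElement R = 1 ∧
      ∀ x : H, HopfAlgebra.antipode (R := ℂ) (HopfAlgebra.antipode (R := ℂ) x)
        = drinfeldElement R * x * v := by
  classical
  obtain ⟨F, hF⟩ := TensorProduct.exists_finset (R := ℂ) R
  obtain ⟨hRunit, hRcomm, hhex, -⟩ := hR
  set u := drinfeldElement R with hu
  have u_eq : u = ∑ p ∈ F, S p.2 * p.1 := by
    rw [hu, show drinfeldElement R = drinMap R from rfl, hF, map_sum]
    simp
  -- expansions of the hexagon relation
  have h1312 : R13 R * R12 R = ∑ p ∈ F, ∑ q ∈ F, (p.1 * q.1) ⊗ₜ[ℂ] (q.2 ⊗ₜ[ℂ] p.2) := by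
    rw [R13, R12, hF, map_sum, map_sum, Finset.sum_mul_sum]
    simp [Algebra.TensorProduct.tmul_mul_tmul]
  have hhexL : (TensorProduct.map LinearMap.id (Bialgebra.comulAlgHom ℂ H).toLinearMap) R
      = ∑ p ∈ F, p.1 ⊗ₜ[ℂ] (Coalgebra.comul (R := ℂ) p.2) := by
    rw [hF, map_sum]
    simp
  have hex' : (∑ p ∈ F, p.1 ⊗ₜ[ℂ] (Coalgebra.comul (R := ℂ) p.2))
      = ∑ p ∈ F, ∑ q ∈ F, (p.1 * q.1) ⊗ₜ[ℂ] (q.2 ⊗ₜ[ℂ] p.2) := by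
    rw [← hhexL, hhex, h1312]
  -- the element w := (id ⊗ ε) R equals 1
  set w := ∑ p ∈ F, ε p.2 • p.1 with hwdef
  have hκ := congrArg (TensorProduct.map (LinearMap.id : H →ₗ[ℂ] H) gcounit) hex'
  have hκL : (TensorProduct.map (LinearMap.id : H →ₗ[ℂ] H) gcounit)
      (∑ p ∈ F, p.1 ⊗ₜ[ℂ] (Coalgebra.comul (R := ℂ) p.2)) = R := by
    rw [map_sum]
    simp only [TensorProduct.map_tmul, gcounit_comul, LinearMap.id_coe, id_eq]
    exact hF.symm
  have hκR : (TensorProduct.map (LinearMap.id : H →ₗ[ℂ] H) gcounit)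
      (∑ p ∈ F, ∑ q ∈ F, (p.1 * q.1) ⊗ₜ[ℂ] (q.2 ⊗ₜ[ℂ] p.2)) = (w ⊗ₜ[ℂ] (1 : H)) * R := by
    rw [map_sum]
    simp only [map_sum, TensorProduct.map_tmul, gcounit_tmul, LinearMap.id_coe, id_eq]
    rw [hF, Finset.mul_sum, Finset.sum_comm]
    refine Finset.sum_congr rfl fun q _ => ?_
    rw [Algebra.TensorProduct.tmul_mul_tmul, one_mul, hwdef, Finset.sum_mul, sum_tmul]
    refine Finset.sum_congr rfl fun p _ => ?_
    rw [tmul_smul, smul_mul_assoc, smul_tmul']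
  have hRw : R = (w ⊗ₜ[ℂ] (1 : H)) * R := by
    conv_lhs => rw [← hκL]
    rw [hκ, hκR]
  have hw1 : w ⊗ₜ[ℂ] (1 : H) = (1 : H ⊗[ℂ] H) := by
    refine hRunit.mul_right_cancel ?_
    rw [← hRw, one_mul]
  have hw : w = 1 := by
    have h3 := congrArg gcounit hw1
    simpa [Algebra.TensorProduct.one_def] using h3
  -- key consequence of the hexagon:  ∑ (q.2 * S p.2) * (p.1 * q.1) = 1
  have hLam := congrArg (TensorProduct.map (LinearMap.id : H →ₗ[ℂ] H) hSmulS) hex'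
  have hLamL : (TensorProduct.map (LinearMap.id : H →ₗ[ℂ] H) hSmulS)
      (∑ p ∈ F, p.1 ⊗ₜ[ℂ] (Coalgebra.comul (R := ℂ) p.2)) = (1 : H ⊗[ℂ] H) := by
    rw [map_sum]
    simp only [TensorProduct.map_tmul, hSmulS_comul, LinearMap.id_coe, id_eq]
    simp_rw [tmul_smul, smul_tmul']
    rw [← sum_tmul, ← hwdef, hw, Algebra.TensorProduct.one_def]
  have hLamR : (TensorProduct.map (LinearMap.id : H →ₗ[ℂ] H) hSmulS)
      (∑ p ∈ F, ∑ q ∈ F, (p.1 * q.1) ⊗ₜ[ℂ] (q.2 ⊗ₜ[ℂ] p.2))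
      = ∑ p ∈ F, ∑ q ∈ F, (p.1 * q.1) ⊗ₜ[ℂ] (q.2 * S p.2) := by
    rw [map_sum]
    simp only [map_sum, TensorProduct.map_tmul, hSmulS_tmul, LinearMap.id_coe, id_eq]
  have hF1 : (∑ p ∈ F, ∑ q ∈ F, (p.1 * q.1) ⊗ₜ[ℂ] (q.2 * S p.2)) = (1 : H ⊗[ℂ] H) := by
    rw [← hLamR, ← hLam, hLamL]
  have hF1' : ∑ p ∈ F, ∑ q ∈ F, (q.2 * S p.2) * (p.1 * q.1) = 1 := by
    have h4 := congrArg (LinearMap.mul' ℂ H ∘ₗ (TensorProduct.comm ℂ H H).toLinearMap) hF1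
    simpa [Algebra.TensorProduct.one_def] using h4
  -- key lemma (I) : ∑ S(y₂) u y₁ = ε(y) u
  have hI : ∀ (y : H) (ry : Repr ℂ y (H × H)),
      ∑ i ∈ ry.index, S (ry.right i) * (u * ry.left i) = ε y • u := by
    intro y ry
    have h2 := congrArg drinMap (hRcomm y)
    rw [hF, ← ry.eq] at h2
    simp only [map_sum, TensorProduct.comm_tmul, Finset.sum_mul_sum,
      Algebra.TensorProduct.tmul_mul_tmul, drinMap_tmul] at h2
    have hL : ∑ p ∈ F, ∑ i ∈ ry.index,
        S (p.2 * ry.right i) * (p.1 * ry.left i)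
        = ∑ i ∈ ry.index, S (ry.right i) * (u * ry.left i) := by
      rw [Finset.sum_comm]
      refine Finset.sum_congr rfl fun i _ => ?_
      calc ∑ p ∈ F, S (p.2 * ry.right i) * (p.1 * ry.left i)
          = ∑ p ∈ F, S (ry.right i) * ((S p.2 * p.1) * ry.left i) := by
            refine Finset.sum_congr rfl fun p _ => ?_
            rw [antipode_mul']
            simp [mul_assoc]
        _ = S (ry.right i) * ((∑ p ∈ F, S p.2 * p.1) * ry.left i) := by
            rw [← Finset.mul_sum, ← Finset.sum_mul]
        _ = S (ry.right i) * (u * ry.left i) := by rw [← u_eq]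
    have hR' : ∑ i ∈ ry.index, ∑ p ∈ F,
        S (ry.left i * p.2) * (ry.right i * p.1) = ε y • u := by
      rw [Finset.sum_comm]
      calc ∑ p ∈ F, ∑ i ∈ ry.index, S (ry.left i * p.2) * (ry.right i * p.1)
          = ∑ p ∈ F, ∑ i ∈ ry.index, S p.2 * ((S (ry.left i) * ry.right i) * p.1) := by
            refine Finset.sum_congr rfl fun p _ => Finset.sum_congr rfl fun i _ => ?_
            rw [antipode_mul']
            simp [mul_assoc]
        _ = ∑ p ∈ F, S p.2 * ((∑ i ∈ ry.index, S (ry.left i) * ry.right i) * p.1) := by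
            refine Finset.sum_congr rfl fun p _ => ?_
            rw [← Finset.mul_sum, ← Finset.sum_mul]
        _ = ∑ p ∈ F, S p.2 * ((ε y • (1 : H)) * p.1) := by
            rw [HopfAlgebra.sum_antipode_mul_eq_smul ry]
        _ = ε y • u := by
            simp only [smul_mul_assoc, one_mul, mul_smul_comm]
            rw [← Finset.smul_sum, ← u_eq]
    rw [← hL, h2]
    exact hR'
  -- key lemma (A) : S² x * u = u * x
  have hA : ∀ x : H, S (S x) * u = u * x := by
    intro x
    let rx := Repr.arbitrary ℂ x
    let rx₁ : ∀ i : H × H, Repr ℂ (rx.left i) (H × H) := fun i => Repr.arbitrary ℂ _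
    let rx₂ : ∀ i : H × H, Repr ℂ (rx.right i) (H × H) := fun i => Repr.arbitrary ℂ _
    have hZ := congrArg (psiM u) (Coalgebra.sum_tmul_tmul_eq rx rx₁ rx₂)
    simp only [map_sum, psiM_tmul] at hZ
    have hL : ∑ i ∈ rx.index, ∑ k ∈ (rx₁ i).index,
        (S (S (rx.right i)) * S ((rx₁ i).right k)) * (u * (rx₁ i).left k)
        = S (S x) * u := by
      calc ∑ i ∈ rx.index, ∑ k ∈ (rx₁ i).index,
          (S (S (rx.right i)) * S ((rx₁ i).right k)) * (u * (rx₁ i).left k)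
          = ∑ i ∈ rx.index, S (S (rx.right i)) *
              (∑ k ∈ (rx₁ i).index, S ((rx₁ i).right k) * (u * (rx₁ i).left k)) := by
            refine Finset.sum_congr rfl fun i _ => ?_
            rw [Finset.mul_sum]
            exact Finset.sum_congr rfl fun k _ => by rw [mul_assoc]
        _ = ∑ i ∈ rx.index, S (S (rx.right i)) * (ε (rx.left i) • u) := by
            refine Finset.sum_congr rfl fun i _ => ?_
            rw [hI (rx.left i) (rx₁ i)]
        _ = (∑ i ∈ rx.index, ε (rx.left i) • S (S (rx.right i))) * u := by
            rw [Finset.sum_mul]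
            refine Finset.sum_congr rfl fun i _ => ?_
            rw [mul_smul_comm, ← smul_mul_assoc]
        _ = S (S x) * u := by
            have h5 : ∑ i ∈ rx.index, ε (rx.left i) • S (S (rx.right i)) = S (S x) := by
              conv_rhs => rw [← sum_counit_smul_right rx]
              simp only [map_sum, map_smul]
            rw [h5]
    have hR2 : ∑ i ∈ rx.index, ∑ k ∈ (rx₂ i).index,
        (S (S ((rx₂ i).right k)) * S ((rx₂ i).left k)) * (u * rx.left i)
        = u * x := by
      calc ∑ i ∈ rx.index, ∑ k ∈ (rx₂ i).index,
          (S (S ((rx₂ i).right k)) * S ((rx₂ i).left k)) * (u * rx.left i)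
          = ∑ i ∈ rx.index,
              (∑ k ∈ (rx₂ i).index, S ((rx₂ i).left k * S ((rx₂ i).right k))) * (u * rx.left i) := by
            refine Finset.sum_congr rfl fun i _ => ?_
            rw [Finset.sum_mul]
            refine Finset.sum_congr rfl fun k _ => ?_
            rw [antipode_mul']
        _ = ∑ i ∈ rx.index, S (ε (rx.right i) • (1 : H)) * (u * rx.left i) := by
            refine Finset.sum_congr rfl fun i _ => ?_
            rw [← map_sum, HopfAlgebra.sum_mul_antipode_eq_smul (rx₂ i)]
        _ = ∑ i ∈ rx.index, ε (rx.right i) • (u * rx.left i) := by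
            refine Finset.sum_congr rfl fun i _ => ?_
            rw [map_smul, antipode_one', smul_mul_assoc, one_mul]
        _ = u * x := by
            simp_rw [← mul_smul_comm]
            rw [← Finset.mul_sum, sum_counit_smul_left rx]
    rw [← hL, hZ]
    exact hR2
  -- the inverse of u
  set v := ∑ p ∈ F, p.2 * S (S p.1) with hv
  have hvu : v * u = 1 := by
    calc v * u = ∑ p ∈ F, (p.2 * S (S p.1)) * u := by rw [hv, Finset.sum_mul]
      _ = ∑ p ∈ F, p.2 * (u * p.1) := by
          refine Finset.sum_congr rfl fun p _ => ?_
          rw [mul_assoc, hA p.1]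
      _ = ∑ p ∈ F, ∑ q ∈ F, (p.2 * S q.2) * (q.1 * p.1) := by
          refine Finset.sum_congr rfl fun p _ => ?_
          rw [u_eq, Finset.sum_mul, Finset.mul_sum]
          refine Finset.sum_congr rfl fun q _ => ?_
          simp [mul_assoc]
      _ = ∑ q ∈ F, ∑ p ∈ F, (p.2 * S q.2) * (q.1 * p.1) := Finset.sum_comm
      _ = 1 := hF1'
  have huv : u * v = 1 := by
    have hsurj : Function.Surjective (LinearMap.mulRight ℂ u) := fun x =>
      ⟨x * v, by simp [LinearMap.mulRight_apply, mul_assoc, hvu]⟩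
    have hinj : Function.Injective (LinearMap.mulRight ℂ u) :=
      LinearMap.injective_iff_surjective.mpr hsurj
    apply hinj
    simp [LinearMap.mulRight_apply, mul_assoc, hvu]
  refine ⟨v, huv, hvu, fun x => ?_⟩
  calc S (S x) = S (S x) * (u * v) := by rw [huv, mul_one]
    _ = (S (S x) * u) * v := (mul_assoc _ _ _).symm
    _ = u * x * v := by rw [hA x]

end
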